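/- arXiv:2305.03333 — 4 statements merged into one kernel-verified Lean document; each statement's English description precedes it below -/
import Mathlib

section
/- Let 0 < s < ∞ and let μ be a finite positive Borel measure on [0,1). If μ is an s-Carleson measure, i.e. there is M > 0 with μ([a,1)) ≤ M(1-a)^s for all 0 ≤ a < 1, then the moments satisfy μ_n = O(n^{-s}), i.e. there is C > 0 with μ_n ≤ C n^{-s} for all n ≥ 1. -/
open MeasureTheory

open Set Real in
/-- If `μ` is an `s`-Carleson measure on `[0,1)`, then its moments satisfy `μ_n = O(n^{-s})`. -/
theorem carleson_implies_moment_decay (s : ℝ) (hs : 0 < s)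
    (μ : Measure ℝ) [IsFiniteMeasure μ]
    (hCar : ∃ M : ℝ, 0 < M ∧ ∀ a : ℝ, 0 ≤ a → a < 1 →
      (μ (Set.Ico a 1)).toReal ≤ M * (1 - a) ^ s) :
    ∃ C : ℝ, 0 < C ∧ ∀ n : ℕ, 1 ≤ n →
      (∫ t in Set.Ico (0:ℝ) 1, t ^ n ∂μ) ≤ C * (n : ℝ) ^ (-s) := by
  obtain ⟨M, hM0, hM⟩ := hCar
  set c0 : ℝ := ∫ t in Ioo (0:ℝ) 1, t ^ (-(1:ℝ)/2) with hc0
  have hc0nn : 0 ≤ c0 :=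
    setIntegral_nonneg measurableSet_Ioo fun t ht => Real.rpow_nonneg ht.1.le _
  refine ⟨max 1 (M * (2*s)^s * c0), lt_of_lt_of_le one_pos (le_max_left _ _), ?_⟩
  intro n hn
  have hn0 : (0:ℝ) < n := by exact_mod_cast hn
  set ν : Measure ℝ := μ.restrict (Ico 0 1) with hν
  have f_nn : 0 ≤ᵐ[ν] fun t : ℝ => t ^ n :=
    ae_restrict_of_forall_mem measurableSet_Ico fun t ht => pow_nonneg ht.1 n
  have f_int : Integrable (fun t : ℝ => t ^ n) ν := by
    refine (integrable_const (1:ℝ)).mono' (by fun_prop) ?_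
    refine ae_restrict_of_forall_mem measurableSet_Ico fun t ht => ?_
    rw [Real.norm_eq_abs, abs_pow, abs_of_nonneg ht.1]
    exact pow_le_one₀ ht.1 ht.2.le
  rw [show (∫ t in Set.Ico (0:ℝ) 1, t ^ n ∂μ) = ∫ t, t ^ n ∂ν from rfl,
    f_int.integral_eq_integral_meas_lt f_nn]
  set K : ℝ := M * (2*s)^s * (n:ℝ)^(-s) with hK
  have hKnn : 0 ≤ K := by positivity
  set h : ℝ → ℝ := (Ioo (0:ℝ) 1).indicator (fun t => K * t ^ (-(1:ℝ)/2)) with hh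
  have h_int : Integrable h (volume.restrict (Ioi (0:ℝ))) := by
    rw [hh, integrable_indicator_iff measurableSet_Ioo]
    have hint1 : IntegrableOn (fun t : ℝ => t ^ (-(1:ℝ)/2)) (Ioo (0:ℝ) 1) volume :=
      (intervalIntegral.integrableOn_Ioo_rpow_iff one_pos).mpr (by norm_num)
    exact IntegrableOn.mono (hint1.const_mul K) (subset_refl _) Measure.restrict_le_self
  have key : ∀ t ∈ Ioi (0:ℝ), (ν {a : ℝ | t < a ^ n}).toReal ≤ h t := by
    intro t ht
    rcases le_or_gt 1 t with h1 | h1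
    · have hempty : {a : ℝ | t < a ^ n} ∩ Ico 0 1 = ∅ := by
        ext a
        simp only [mem_inter_iff, mem_setOf_eq, mem_Ico, mem_empty_iff_false, iff_false]
        rintro ⟨hta, ha0, ha1⟩
        exact absurd hta (not_lt.mpr ((pow_le_one₀ ha0 ha1.le).trans h1))
      rw [hν, Measure.restrict_apply' measurableSet_Ico, hempty]
      simp only [measure_empty, ENNReal.toReal_zero]
      rw [hh, indicator_apply_eq_zero.mpr]
      intro hmem; exact absurd hmem.2 (not_lt.mpr h1)
    · -- 0 < t < 1
      have ht0 : (0:ℝ) < t := ht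
      set a : ℝ := t ^ ((n:ℝ)⁻¹) with ha
      have ha0 : 0 ≤ a := Real.rpow_nonneg ht0.le _
      have ha1 : a < 1 := Real.rpow_lt_one ht0.le h1 (by positivity)
      have hsub : {x : ℝ | t < x ^ n} ∩ Ico 0 1 ⊆ Ico a 1 := by
        rintro x ⟨hx, hx0, hx1⟩
        refine ⟨?_, hx1⟩
        have : t ^ ((n:ℝ)⁻¹) ≤ (x ^ n) ^ ((n:ℝ)⁻¹) :=
          Real.rpow_le_rpow ht0.le (le_of_lt hx) (by positivity)
        calc a ≤ (x ^ n) ^ ((n:ℝ)⁻¹) := this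
          _ = x := by
            rw [← Real.rpow_natCast x n, ← Real.rpow_mul hx0,
              mul_inv_cancel₀ (by exact_mod_cast hn0.ne'), Real.rpow_one]
      have step1 : (ν {x : ℝ | t < x ^ n}).toReal ≤ (μ (Ico a 1)).toReal := by
        rw [hν, Measure.restrict_apply' measurableSet_Ico]
        exact ENNReal.toReal_mono (measure_ne_top μ _) (measure_mono hsub)
      have step2 : (μ (Ico a 1)).toReal ≤ M * (1 - a) ^ s := hM a ha0 ha1
      -- 1 - a ≤ (-log t) / n
      have hlog : 1 - a ≤ (-Real.log t) / n := by
        have : Real.log t / n + 1 ≤ Real.exp (Real.log t / n) := Real.add_one_le_exp _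
        have hexp : a = Real.exp (Real.log t / n) := by
          rw [ha, Real.rpow_def_of_pos ht0, div_eq_inv_mul, mul_comm]
        have hdiv : -Real.log t / (n:ℝ) = -(Real.log t / n) := by ring
        rw [hexp, hdiv]; linarith
      have hlog0 : 0 ≤ -Real.log t := by
        simpa using Real.log_nonpos ht0.le h1.le
      have step3 : (1 - a) ^ s ≤ ((-Real.log t) / n) ^ s := by
        apply Real.rpow_le_rpow (by linarith) hlog hs.le
      -- (-log t) ≤ 2s * t^(-(1/(2s)))
      have hlogbound : -Real.log t ≤ (2*s) * t ^ (-(1/(2*s))) := by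
        have e1 : (t⁻¹ : ℝ) ^ (1/(2*s)) = t ^ (-(1/(2*s))) := by
          rw [Real.inv_rpow ht0.le, ← Real.rpow_neg ht0.le]
        have h2 := Real.log_le_rpow_div (x := t⁻¹) (ε := 1/(2*s))
          (by positivity) (by positivity)
        rw [Real.log_inv, e1,
          show t ^ (-(1/(2*s))) / (1/(2*s)) = 2*s * t ^ (-(1/(2*s))) from by
            rw [div_div_eq_mul_div, div_one, mul_comm]] at h2
        exact h2
      have step4 : ((-Real.log t) / n) ^ s ≤ (2*s)^s * t ^ (-(1:ℝ)/2) * (n:ℝ)^(-s) := by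
        rw [Real.div_rpow hlog0 hn0.le, div_eq_mul_inv, ← Real.rpow_neg hn0.le]
        gcongr ?_ * _
        calc (-Real.log t) ^ s ≤ ((2*s) * t ^ (-(1/(2*s)))) ^ s := by
              apply Real.rpow_le_rpow hlog0 hlogbound hs.le
          _ = (2*s)^s * t ^ (-(1:ℝ)/2) := by
              rw [Real.mul_rpow (by positivity) (Real.rpow_nonneg ht0.le _),
                ← Real.rpow_mul ht0.le,
                show (-(1/(2*s)))*s = -(1:ℝ)/2 from by field_simp]
      have hht : h t = K * t ^ (-(1:ℝ)/2) := by
        rw [hh, indicator_of_mem (Set.mem_Ioo.mpr ⟨ht0, h1⟩)]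
      rw [hht, hK]
      calc (ν {x : ℝ | t < x ^ n}).toReal ≤ M * (1 - a) ^ s := step1.trans step2
        _ ≤ M * (((-Real.log t) / n) ^ s) := by gcongr
        _ ≤ M * ((2*s)^s * t ^ (-(1:ℝ)/2) * (n:ℝ)^(-s)) := by gcongr
        _ = M * (2*s)^s * (n:ℝ)^(-s) * t ^ (-(1:ℝ)/2) := by ring
  have hmono : (∫ t in Ioi (0:ℝ), (ν {a : ℝ | t < a ^ n}).toReal) ≤ ∫ t in Ioi (0:ℝ), h t := by
    refine integral_mono_of_nonneg ?_ h_int ?_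
    · exact Filter.Eventually.of_forall fun t => ENNReal.toReal_nonneg
    · exact ae_restrict_of_forall_mem measurableSet_Ioi key
  refine hmono.trans ?_
  have : (∫ t in Ioi (0:ℝ), h t) = K * c0 := by
    rw [hh, integral_indicator measurableSet_Ioo, Measure.restrict_restrict measurableSet_Ioo,
      inter_eq_self_of_subset_left (fun x hx => hx.1), hc0, integral_const_mul]
  rw [this]
  have : K * c0 = (M * (2*s)^s * c0) * (n:ℝ)^(-s) := by rw [hK]; ring
  rw [this]
  exact mul_le_mul_of_nonneg_right (le_max_right _ _) (Real.rpow_nonneg hn0.le _)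
end

section
/- Let 0 < s < ∞ and let μ be a finite positive Borel measure on [0,1). If the moments satisfy μ_n ≤ C n^{-s} for all n ≥ 1, then μ is an s-Carleson measure: μ([a,1)) ≲ (1-a)^s for all 0 ≤ a < 1. -/
open MeasureTheory

/-- If the moments of `μ` satisfy `μ_n ≤ C n^{-s}`, then `μ` is an `s`-Carleson measure. -/
theorem moment_decay_implies_carleson (s : ℝ) (hs : 0 < s)
    (μ : Measure ℝ) [IsFiniteMeasure μ] (C : ℝ)
    (hmom : ∀ n : ℕ, 1 ≤ n →
      (∫ t in Set.Ico (0:ℝ) 1, t ^ n ∂μ) ≤ C * (n : ℝ) ^ (-s)) :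
    ∃ M : ℝ, 0 < M ∧ ∀ a : ℝ, 0 ≤ a → a < 1 →
      (μ (Set.Ico a 1)).toReal ≤ M * (1 - a) ^ s := by
  -- C is nonnegative
  have hC : 0 ≤ C := by
    have h1 := hmom 1 le_rfl
    have h0 : (0:ℝ) ≤ ∫ t in Set.Ico (0:ℝ) 1, t ^ 1 ∂μ :=
      setIntegral_nonneg measurableSet_Ico (fun x hx => by
        have := hx.1; positivity)
    simpa [Real.one_rpow] using h0.trans h1
  refine ⟨(μ Set.univ).toReal * 2 ^ s + Real.exp 4 * C + 1, by positivity, ?_⟩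
  intro a ha0 ha1
  have h1a : 0 < 1 - a := by linarith
  have h1as : (0:ℝ) ≤ (1 - a) ^ s := Real.rpow_nonneg h1a.le s
  have hμT : (0:ℝ) ≤ (μ (Set.Ico a 1)).toReal := ENNReal.toReal_nonneg
  by_cases hcase : a < 1/2
  · -- easy case : (1-a)^s ≥ (1/2)^s
    have hle : (μ (Set.Ico a 1)).toReal ≤ (μ Set.univ).toReal := by
      apply ENNReal.toReal_mono (measure_ne_top μ _)
      exact measure_mono (Set.subset_univ _)
    have h2 : ((1:ℝ)/2) ^ s ≤ (1 - a) ^ s :=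
      Real.rpow_le_rpow (by norm_num) (by linarith) hs.le
    have hmul : ((1:ℝ)/2) ^ s * 2 ^ s = 1 := by
      rw [← Real.mul_rpow (by norm_num) (by norm_num)]
      norm_num
    have hμu : (0:ℝ) ≤ (μ Set.univ).toReal := ENNReal.toReal_nonneg
    have h2s : (0:ℝ) ≤ (2:ℝ) ^ s := Real.rpow_nonneg (by norm_num) s
    nlinarith [mul_le_mul_of_nonneg_left h2 (mul_nonneg hμu h2s),
      mul_nonneg (mul_nonneg (Real.exp_pos 4).le hC) h1as]
  · -- main case : a ∈ [1/2, 1)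
    push_neg at hcase
    have hapos : (0:ℝ) < a := by linarith
    set n : ℕ := ⌈1/(1-a)⌉₊ with hn
    have hxpos : (0:ℝ) < 1/(1-a) := by positivity
    have hn1 : 1 ≤ n := Nat.one_le_iff_ne_zero.mpr (by
      simp only [hn, ne_eq, Nat.ceil_eq_zero, not_le]
      exact hxpos)
    have hnge : 1/(1-a) ≤ (n:ℝ) := Nat.le_ceil _
    have hone : (1:ℝ) ≤ 1/(1-a) := by
      rw [le_div_iff₀ h1a]; linarith
    have hnle : (n:ℝ) ≤ 2/(1-a) := by
      have h := Nat.ceil_lt_add_one hxpos.le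
      have : 1/(1-a) + 1 ≤ 2/(1-a) := by
        rw [div_add' _ _ _ h1a.ne', div_le_div_iff₀ h1a h1a]
        nlinarith
      exact le_trans h.le this
    -- a^n ≥ exp(-4)
    have hexp : Real.exp (-4) ≤ a ^ n := by
      have hlog : 1 - a⁻¹ ≤ Real.log a := Real.one_sub_inv_le_log_of_pos hapos
      have hainv : a⁻¹ ≤ 2 := by
        rw [inv_le_comm₀ (by linarith) (by norm_num)]; linarith
      have hlog2 : -2 * (1 - a) ≤ Real.log a := by
        have : 1 - a⁻¹ ≥ -2 * (1-a) := by
          nlinarith [mul_inv_cancel₀ hapos.ne',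
            mul_nonneg (by linarith : (0:ℝ) ≤ 1 - a) (by linarith : (0:ℝ) ≤ 2*a - 1)]
        linarith
      have hn1a : (n:ℝ) * (1 - a) ≤ 2 := by
        have := mul_le_mul_of_nonneg_right hnle h1a.le
        rwa [div_mul_cancel₀ _ h1a.ne'] at this
      have hkey : (-4:ℝ) ≤ (n:ℝ) * Real.log a := by
        have hlogneg : Real.log a ≤ 0 := Real.log_nonpos hapos.le (by linarith)
        nlinarith [Nat.cast_nonneg (α := ℝ) n]
      calc Real.exp (-4) ≤ Real.exp ((n:ℝ) * Real.log a) := Real.exp_le_exp.mpr hkey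
        _ = a ^ n := by
            rw [mul_comm, Real.exp_mul, Real.exp_log hapos, Real.rpow_natCast]
    -- integrability
    have hint : IntegrableOn (fun t : ℝ => t ^ n) (Set.Ico (0:ℝ) 1) μ := by
      apply Measure.integrableOn_of_bounded (M := 1) (measure_ne_top μ _)
        (continuous_pow n).aestronglyMeasurable
      filter_upwards [ae_restrict_mem measurableSet_Ico] with x hx
      rw [Real.norm_eq_abs, abs_pow, abs_of_nonneg hx.1]
      exact pow_le_one₀ hx.1 hx.2.le
    have hsub : Set.Ico a 1 ⊆ Set.Ico (0:ℝ) 1 :=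
      Set.Ico_subset_Ico ha0 le_rfl
    have hlow : a ^ n * (μ (Set.Ico a 1)).toReal ≤ ∫ t in Set.Ico a 1, t ^ n ∂μ := by
      apply setIntegral_ge_of_const_le_real measurableSet_Ico (measure_ne_top μ _)
      · intro x hx
        exact pow_le_pow_left₀ ha0 hx.1 n
      · exact hint.mono_set hsub
    have hmono : (∫ t in Set.Ico a 1, t ^ n ∂μ) ≤ ∫ t in Set.Ico (0:ℝ) 1, t ^ n ∂μ := by
      apply setIntegral_mono_set hint
      · filter_upwards [ae_restrict_mem measurableSet_Ico] with x hx
        exact pow_nonneg hx.1 n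
      · exact Filter.Eventually.of_forall hsub
    have hup := hmom n hn1
    -- n^{-s} ≤ (1-a)^s
    have hns : (n:ℝ) ^ (-s) ≤ (1 - a) ^ s := by
      have hnpos : (0:ℝ) < n := by exact_mod_cast hn1
      rw [Real.rpow_neg hnpos.le, ← Real.inv_rpow hnpos.le]
      apply Real.rpow_le_rpow (by positivity) _ hs.le
      rw [inv_le_comm₀ hnpos h1a]
      simpa [one_div] using hnge
    -- combine
    have hchain : a ^ n * (μ (Set.Ico a 1)).toReal ≤ C * (1 - a) ^ s := by
      calc a ^ n * (μ (Set.Ico a 1)).toReal ≤ C * (n:ℝ) ^ (-s) :=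
            le_trans hlow (le_trans hmono hup)
        _ ≤ C * (1 - a) ^ s := mul_le_mul_of_nonneg_left hns hC
    have hfinal : (μ (Set.Ico a 1)).toReal ≤ Real.exp 4 * C * (1 - a) ^ s := by
      have h1 : Real.exp (-4) * (μ (Set.Ico a 1)).toReal ≤ C * (1 - a) ^ s :=
        le_trans (mul_le_mul_of_nonneg_right hexp hμT) hchain
      have h2 := mul_le_mul_of_nonneg_left h1 (Real.exp_pos 4).le
      rw [← mul_assoc, ← Real.exp_add] at h2
      norm_num at h2
      linarith
    have hμu : (0:ℝ) ≤ (μ Set.univ).toReal := ENNReal.toReal_nonneg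
    have h2s : (0:ℝ) ≤ (2:ℝ) ^ s := Real.rpow_nonneg (by norm_num) s
    nlinarith [mul_nonneg (mul_nonneg hμu h2s) h1as]
end

section
/- Let β > 0, γ ≥ 0, 0 ≤ q < s < ∞, and let μ be a finite positive Borel measure on [0,1) which is a γ-logarithmic s-Carleson measure, i.e. (log(e/(1-a)))^γ μ([a,1)) ≤ M (1-a)^s for all 0 ≤ a < 1. Then sup_{w ∈ 𝔻} ∫_0^1 (1-|w|)^β (log(e/(1-|w|)))^γ / ((1-t)^q (1-|w|t)^{s+β-q}) dμ(t) < ∞. -/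
open MeasureTheory

private lemma geom_sum_le_inv {x : ℝ} (h0 : 0 ≤ x) (h1 : x < 1) (n : ℕ) :
    ∑ i ∈ Finset.range n, x ^ i ≤ (1 - x)⁻¹ := by
  have := Summable.sum_le_tsum (Finset.range n) (fun i _ => pow_nonneg h0 i)
    (summable_geometric_of_lt_one h0 h1)
  rwa [tsum_geometric_of_lt_one h0 h1] at this

private lemma minfun_le_geom {b δ' : ℝ} (hb : 0 < b) (hδ' : 0 < δ') (δ : ℝ) (n : ℕ) :
    min ((b * 2 ^ (n + 1)) ^ δ) ((b * 2 ^ (n + 1)) ^ (-δ')) ≤ b ^ (-δ') * ((2:ℝ) ^ (-δ')) ^ (n+1) := by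
  have h2 : (0:ℝ) < 2 ^ (n+1) := by positivity
  calc min ((b * 2 ^ (n + 1)) ^ δ) ((b * 2 ^ (n + 1)) ^ (-δ'))
      ≤ (b * 2 ^ (n + 1)) ^ (-δ') := min_le_right _ _
    _ = b ^ (-δ') * ((2:ℝ) ^ (-δ')) ^ (n+1) := by
        rw [Real.mul_rpow hb.le h2.le, ← Real.rpow_natCast ((2:ℝ) ^ (-δ')) (n+1),
          ← Real.rpow_natCast (2:ℝ) (n+1), ← Real.rpow_mul (by norm_num), ← Real.rpow_mul (by norm_num)]
        ring_nf

private lemma minfun_summable {b δ δ' : ℝ} (hb : 0 < b) (hδ : 0 < δ) (hδ' : 0 < δ') :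
    Summable (fun n : ℕ => min ((b * 2 ^ (n + 1)) ^ δ) ((b * 2 ^ (n + 1)) ^ (-δ'))) := by
  have hx0 : (0:ℝ) ≤ 2 ^ (-δ') := Real.rpow_nonneg (by norm_num) _
  have hx1 : (2:ℝ) ^ (-δ') < 1 := by
    rw [Real.rpow_lt_one_iff (by norm_num)] <;> norm_num [hδ']
  apply Summable.of_nonneg_of_le (fun n => le_min ?_ ?_) (fun n => minfun_le_geom hb hδ' δ n)
  · exact ((summable_geometric_of_lt_one hx0 hx1).mul_left _).comp_injective (add_left_injective 1)
  · positivity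
  · positivity

private lemma two_rpow_pow (c : ℝ) (k : ℕ) : ((2:ℝ) ^ (-c)) ^ k = ((2:ℝ) ^ k) ^ (-c) := by
  rw [← Real.rpow_natCast ((2:ℝ) ^ (-c)) k, ← Real.rpow_natCast (2:ℝ) k,
    ← Real.rpow_mul (by norm_num), ← Real.rpow_mul (by norm_num)]
  ring_nf

private lemma minfun_tsum_le {b δ δ' : ℝ} (hb : 0 < b) (hb1 : b ≤ 1) (hδ : 0 < δ) (hδ' : 0 < δ')
    (hsum : Summable (fun n : ℕ => min ((b * 2 ^ (n + 1)) ^ δ) ((b * 2 ^ (n + 1)) ^ (-δ')))) :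
    ∑' n : ℕ, min ((b * 2 ^ (n + 1)) ^ δ) ((b * 2 ^ (n + 1)) ^ (-δ'))
      ≤ (1 - 2 ^ (-δ))⁻¹ + (1 - 2 ^ (-δ'))⁻¹ := by
  set h : ℕ → ℝ := fun n => min ((b * 2 ^ (n + 1)) ^ δ) ((b * 2 ^ (n + 1)) ^ (-δ')) with hh
  have hex : ∃ n : ℕ, 1 < b * 2 ^ (n + 1) := by
    obtain ⟨n, hn⟩ := pow_unbounded_of_one_lt (b⁻¹) (by norm_num : (1:ℝ) < 2)
    exact ⟨n, by rw [← inv_lt_iff_one_lt_mul₀' hb] at *; calc b⁻¹ < 2^n := hn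
                 _ ≤ 2^(n+1) := by gcongr <;> norm_num⟩
  set n₀ := Nat.find hex with hn₀def
  have hn₀ : 1 < b * 2 ^ (n₀ + 1) := Nat.find_spec hex
  have hb2 : b * 2 ^ n₀ ≤ 1 := by
    rcases Nat.eq_zero_or_pos n₀ with h0 | h0
    · simpa [h0] using hb1
    · have := Nat.find_min hex (m := n₀ - 1) (by omega)
      have : ¬ (1 < b * 2 ^ (n₀ - 1 + 1)) := this
      rw [Nat.sub_add_cancel h0] at this
      linarith
  have hx0 : (0:ℝ) ≤ 2 ^ (-δ) := Real.rpow_nonneg (by norm_num) _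
  have hx1 : (2:ℝ) ^ (-δ) < 1 := by
    rw [Real.rpow_lt_one_iff (by norm_num)]; norm_num [hδ]
  have hy0 : (0:ℝ) ≤ 2 ^ (-δ') := Real.rpow_nonneg (by norm_num) _
  have hy1 : (2:ℝ) ^ (-δ') < 1 := by
    rw [Real.rpow_lt_one_iff (by norm_num)]; norm_num [hδ']
  rw [← Summable.sum_add_tsum_nat_add n₀ hsum]
  have part1 : ∑ i ∈ Finset.range n₀, h i ≤ (1 - 2 ^ (-δ))⁻¹ := by
    have step : ∀ i ∈ Finset.range n₀, h i ≤ ((2:ℝ) ^ (-δ)) ^ (n₀ - 1 - i) := by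
      intro i hi
      rw [Finset.mem_range] at hi
      obtain ⟨k, hk⟩ : ∃ k, n₀ = i + 1 + k := ⟨n₀ - (i + 1), by omega⟩
      have hki : n₀ - 1 - i = k := by omega
      rw [hki]
      have hbk : b * 2 ^ (i + 1) ≤ ((2:ℝ) ^ k)⁻¹ := by
        rw [inv_eq_one_div, le_div_iff₀ (by positivity)]
        calc (b * 2^(i+1)) * 2^k = b * 2 ^ n₀ := by rw [hk]; ring
          _ ≤ 1 := hb2
      calc h i ≤ (b * 2 ^ (i + 1)) ^ δ := min_le_left _ _
        _ ≤ (((2:ℝ) ^ k)⁻¹) ^ δ := Real.rpow_le_rpow (by positivity) hbk hδ.le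
        _ = ((2:ℝ) ^ (-δ)) ^ k := by
            rw [two_rpow_pow, ← Real.rpow_natCast (2:ℝ) k, ← Real.rpow_neg (by norm_num),
              ← Real.rpow_mul (by norm_num), ← Real.rpow_mul (by norm_num)]
            ring_nf
    calc ∑ i ∈ Finset.range n₀, h i ≤ ∑ i ∈ Finset.range n₀, ((2:ℝ) ^ (-δ)) ^ (n₀ - 1 - i) :=
          Finset.sum_le_sum step
      _ = ∑ i ∈ Finset.range n₀, ((2:ℝ) ^ (-δ)) ^ i := Finset.sum_range_reflect _ _
      _ ≤ (1 - 2 ^ (-δ))⁻¹ := by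
          have := Summable.sum_le_tsum (Finset.range n₀) (fun i _ => pow_nonneg hx0 i)
            (summable_geometric_of_lt_one hx0 hx1)
          rwa [tsum_geometric_of_lt_one hx0 hx1] at this
  have part2 : ∑' k : ℕ, h (k + n₀) ≤ (1 - 2 ^ (-δ'))⁻¹ := by
    have step : ∀ k : ℕ, h (k + n₀) ≤ ((2:ℝ) ^ (-δ')) ^ k := by
      intro k
      have h2k : ((2:ℝ) ^ k) ≤ b * 2 ^ (k + n₀ + 1) := by
        calc ((2:ℝ) ^ k) = 1 * 2 ^ k := (one_mul _).symm
          _ ≤ (b * 2 ^ (n₀ + 1)) * 2 ^ k :=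
              mul_le_mul_of_nonneg_right (by linarith) (by positivity)
          _ = b * 2 ^ (k + n₀ + 1) := by ring
      calc h (k + n₀) ≤ (b * 2 ^ (k + n₀ + 1)) ^ (-δ') := min_le_right _ _
        _ ≤ (((2:ℝ) ^ k)) ^ (-δ') := Real.rpow_le_rpow_of_nonpos (by positivity) h2k (by linarith)
        _ = ((2:ℝ) ^ (-δ')) ^ k := (two_rpow_pow _ _).symm
    calc ∑' k : ℕ, h (k + n₀) ≤ ∑' k : ℕ, ((2:ℝ) ^ (-δ')) ^ k :=
          Summable.tsum_le_tsum step (hsum.comp_injective (add_left_injective n₀))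
            (summable_geometric_of_lt_one hy0 hy1)
      _ = (1 - 2 ^ (-δ'))⁻¹ := tsum_geometric_of_lt_one hy0 hy1
  exact add_le_add part1 part2

private lemma pow_log_bound {β γ : ℝ} (hβ : 0 < β) (hγ : 0 ≤ γ) {u : ℝ} (hu : 0 < u) (hu1 : u ≤ 1) :
    u ^ β * (1 + Real.log (1 / u)) ^ γ ≤ (1 + 2 * (γ + 1) / β) ^ γ * u ^ (β / 2) := by
  set ε := β / (2 * (γ + 1)) with hεdef
  have hε : 0 < ε := by positivity
  have hlog0 : 0 ≤ Real.log (1 / u) := Real.log_nonneg (by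
    rw [le_div_iff₀ hu]; linarith)
  have hkey : 1 + Real.log (1 / u) ≤ (1 + 1 / ε) * u ^ (-ε) := by
    have h1 : Real.log (1 / u) = (1 / ε) * Real.log ((1 / u) ^ ε) := by
      rw [Real.log_rpow (by positivity)]; field_simp
    have h2 : Real.log ((1 / u) ^ ε) ≤ (1 / u) ^ ε := by
      have := Real.log_le_sub_one_of_pos (x := (1 / u) ^ ε) (by positivity)
      linarith
    have h3 : (1 / u : ℝ) ^ ε = u ^ (-ε) := by
      rw [one_div, Real.inv_rpow hu.le, ← Real.rpow_neg hu.le]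
    have h4 : (1:ℝ) ≤ u ^ (-ε) := by
      rw [← Real.rpow_zero u]
      exact Real.rpow_le_rpow_of_exponent_ge hu hu1 (by linarith)
    have h5 : Real.log (1 / u) ≤ (1 / ε) * u ^ (-ε) := by
      rw [h1, ← h3]; exact mul_le_mul_of_nonneg_left h2 (by positivity)
    calc 1 + Real.log (1 / u) ≤ u ^ (-ε) + (1 / ε) * u ^ (-ε) := by linarith
      _ = (1 + 1 / ε) * u ^ (-ε) := by ring
  have h1ε : 1 / ε = 2 * (γ + 1) / β := by rw [hεdef]; field_simp
  have step1 : (1 + Real.log (1 / u)) ^ γ ≤ ((1 + 1 / ε) * u ^ (-ε)) ^ γ :=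
    Real.rpow_le_rpow (by linarith) hkey hγ
  have step2 : ((1 + 1 / ε) * u ^ (-ε)) ^ γ = (1 + 1 / ε) ^ γ * u ^ (-ε * γ) := by
    rw [Real.mul_rpow (by positivity) (by positivity), ← Real.rpow_mul hu.le]
  have hεγ : β - ε * γ ≥ β / 2 := by
    have : ε * γ ≤ β / 2 := by
      rw [hεdef]
      rw [div_mul_eq_mul_div, div_le_div_iff₀ (by positivity) (by norm_num)]
      nlinarith
    linarith
  calc u ^ β * (1 + Real.log (1 / u)) ^ γ
      ≤ u ^ β * ((1 + 1 / ε) ^ γ * u ^ (-ε * γ)) := by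
        exact mul_le_mul_of_nonneg_left (step1.trans_eq step2) (Real.rpow_nonneg hu.le β)
    _ = (1 + 1 / ε) ^ γ * u ^ (β - ε * γ) := by
        rw [show β - ε * γ = β + -ε * γ by ring, Real.rpow_add hu]; ring
    _ ≤ (1 + 1 / ε) ^ γ * u ^ (β / 2) := by
        exact mul_le_mul_of_nonneg_left
          (Real.rpow_le_rpow_of_exponent_ge hu hu1 hεγ) (by positivity)
    _ = (1 + 2 * (γ + 1) / β) ^ γ * u ^ (β / 2) := by rw [h1ε]

set_option maxHeartbeats 1000000 in
private lemma per_n_bound {β γ q s M b : ℝ} (hβ : 0 < β) (hγ : 0 ≤ γ) (hq : 0 ≤ q) (hqs : q < s)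
    (hM : 0 < M) (hb : 0 < b) (hb1 : b ≤ 1) (n : ℕ) {m : ℝ} (hm : 0 ≤ m)
    (hCar : (1 + n * Real.log 2) ^ γ * m ≤ M * (((2:ℝ) ^ n)⁻¹) ^ s) :
    b ^ β * (1 + Real.log (1 / b)) ^ γ /
        ((((2:ℝ) ^ (n+1))⁻¹) ^ q * (max (((2:ℝ) ^ (n+1))⁻¹) b) ^ (s + β - q)) * m
      ≤ (M * 2 ^ s * 2 ^ γ * (1 + 2 * (γ + 1) / β) ^ γ) *
        min ((b * 2 ^ (n+1)) ^ (β / 2)) ((b * 2 ^ (n+1)) ^ (-(s - q))) := by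
  have h2 : (0:ℝ) < 2 := by norm_num
  set P : ℝ := (2:ℝ) ^ (n+1) with hPdef
  have hP : 0 < P := by positivity
  set Q : ℝ := (2:ℝ) ^ n with hQdef
  have hQ : 0 < Q := by positivity
  have hP' : P = (2:ℝ) ^ ((n:ℝ) + 1) := by
    rw [hPdef, ← Real.rpow_natCast 2 (n+1)]; push_cast; ring_nf
  have hQ' : Q = (2:ℝ) ^ (n:ℝ) := by rw [hQdef, ← Real.rpow_natCast 2 n]
  set E : ℝ := 1 + n * Real.log 2 with hEdef
  have hlog2a : (0:ℝ) ≤ Real.log 2 := Real.log_nonneg (by norm_num)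
  have hlog2b : Real.log 2 ≤ 1 := by
    have := Real.log_le_sub_one_of_pos h2; linarith
  have hE : 0 < E := by positivity
  have hE1 : 1 ≤ E := by nlinarith [mul_nonneg (Nat.cast_nonneg n : (0:ℝ) ≤ n) hlog2a]
  set Lb : ℝ := 1 + Real.log (1 / b) with hLbdef
  have hlogb0 : 0 ≤ Real.log (1 / b) := Real.log_nonneg (by rw [le_div_iff₀ hb]; linarith)
  have hLb : 0 < Lb := by positivity
  have hEγ : 0 < E ^ γ := Real.rpow_pos_of_pos hE γ
  have hmm : m ≤ M * ((Q)⁻¹) ^ s / E ^ γ := by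
    rw [le_div_iff₀ hEγ]; calc m * E ^ γ = E ^ γ * m := by ring
      _ ≤ M * (Q⁻¹) ^ s := hCar
  set u : ℝ := b * P with hudef
  have hu : 0 < u := by positivity
  set K1 : ℝ := (1 + 2 * (γ + 1) / β) ^ γ with hK1def
  have hK1 : 1 ≤ K1 := by
    have h0 : (0:ℝ) ≤ 2 * (γ + 1) / β := by positivity
    exact Real.one_le_rpow (by linarith) hγ
  have hlogP : Real.log P = ((n:ℝ) + 1) * Real.log 2 := by
    rw [hPdef, Real.log_pow]; push_cast; ring
  rcases le_or_gt b P⁻¹ with hcase | hcase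
  · -- u ≤ 1 case
    have hu1 : u ≤ 1 := by
      rw [hudef]
      calc b * P ≤ P⁻¹ * P := by gcongr
        _ = 1 := inv_mul_cancel₀ hP.ne'
    have hmax : max (P⁻¹) b = P⁻¹ := max_eq_left hcase
    have hmin : min (u ^ (β / 2)) (u ^ (-(s - q))) = u ^ (β / 2) :=
      min_eq_left (Real.rpow_le_rpow_of_exponent_ge hu hu1 (by linarith))
    rw [hmax, hmin]
    have hD : (P⁻¹) ^ q * (P⁻¹) ^ (s + β - q) = (P⁻¹) ^ (s + β) := by
      rw [← Real.rpow_add (by positivity)]; ring_nf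
    have hlogu0 : 0 ≤ Real.log (1 / u) := Real.log_nonneg (by rw [le_div_iff₀ hu]; linarith)
    have hLbE : Lb / E ≤ 2 * (1 + Real.log (1 / u)) := by
      have hsplit : Real.log (1 / b) = ((n:ℝ) + 1) * Real.log 2 + Real.log (1 / u) := by
        have h1b : (1:ℝ) / b = P * (1 / u) := by field_simp [hudef]; exact hudef
        rw [h1b, Real.log_mul hP.ne' (by positivity), hlogP]
      rw [div_le_iff₀ hE, hLbdef, hsplit, hEdef]
      have hn0 : (0:ℝ) ≤ (n:ℝ) := Nat.cast_nonneg n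
      nlinarith [mul_nonneg hn0 hlog2a, mul_nonneg hlogu0 (mul_nonneg hn0 hlog2a)]
    have hub : u ^ β * (Lb / E) ^ γ ≤ 2 ^ γ * (K1 * u ^ (β / 2)) := by
      have hLbE0 : 0 ≤ Lb / E := by positivity
      have r1 : (Lb / E) ^ γ ≤ (2 * (1 + Real.log (1 / u))) ^ γ :=
        Real.rpow_le_rpow hLbE0 hLbE hγ
      have r2 : (2 * (1 + Real.log (1 / u))) ^ γ = 2 ^ γ * (1 + Real.log (1 / u)) ^ γ :=
        Real.mul_rpow (by norm_num) (by linarith)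
      calc u ^ β * (Lb / E) ^ γ ≤ u ^ β * (2 ^ γ * (1 + Real.log (1 / u)) ^ γ) :=
            mul_le_mul_of_nonneg_left (r1.trans_eq r2) (Real.rpow_nonneg hu.le β)
        _ = 2 ^ γ * (u ^ β * (1 + Real.log (1 / u)) ^ γ) := by ring
        _ ≤ 2 ^ γ * (K1 * u ^ (β / 2)) :=
            mul_le_mul_of_nonneg_left (pow_log_bound hβ hγ hu hu1) (by positivity)
    have key : b ^ β * Lb ^ γ * (M * (Q⁻¹) ^ s / E ^ γ) / (P⁻¹) ^ (s + β)
        = M * 2 ^ s * (u ^ β * (Lb / E) ^ γ) := by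
      have k1 : P ^ (s + β) = 2 ^ s * Q ^ s * P ^ β := by
        rw [hP', hQ', ← Real.rpow_mul (by norm_num), ← Real.rpow_mul (by norm_num),
          ← Real.rpow_mul (by norm_num), ← Real.rpow_add h2, ← Real.rpow_add h2]
        congr 1
        ring
      have k3 : u ^ β = b ^ β * P ^ β := Real.mul_rpow hb.le hP.le
      have k4 : (Lb / E) ^ γ = Lb ^ γ / E ^ γ := Real.div_rpow hLb.le hE.le γ
      rw [Real.inv_rpow hQ.le, Real.inv_rpow hP.le, k3, k4, k1]
      have l1 : Q ^ s ≠ 0 := by positivity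
      have l2 : E ^ γ ≠ 0 := by positivity
      have l3 : P ^ β ≠ 0 := by positivity
      field_simp
      try ring
    calc b ^ β * Lb ^ γ / ((P⁻¹) ^ q * (P⁻¹) ^ (s + β - q)) * m
        = b ^ β * Lb ^ γ * m / (P⁻¹) ^ (s + β) := by rw [hD, div_mul_eq_mul_div]
      _ ≤ b ^ β * Lb ^ γ * (M * (Q⁻¹) ^ s / E ^ γ) / (P⁻¹) ^ (s + β) := by
          gcongr
      _ = M * 2 ^ s * (u ^ β * (Lb / E) ^ γ) := key
      _ ≤ M * 2 ^ s * (2 ^ γ * (K1 * u ^ (β / 2))) :=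
          mul_le_mul_of_nonneg_left hub (by positivity)
      _ = M * 2 ^ s * 2 ^ γ * K1 * u ^ (β / 2) := by ring
  · -- u > 1 case
    have hu1 : 1 < u := by
      rw [hudef]
      calc 1 = P⁻¹ * P := (inv_mul_cancel₀ hP.ne').symm
        _ < b * P := by gcongr
    have hmax : max (P⁻¹) b = b := max_eq_right hcase.le
    have hmin : min (u ^ (β / 2)) (u ^ (-(s - q))) = u ^ (-(s - q)) :=
      min_eq_right (Real.rpow_le_rpow_of_exponent_le hu1.le (by linarith))
    rw [hmax, hmin]
    have hLbE : (Lb / E) ^ γ ≤ 2 ^ γ := by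
      apply Real.rpow_le_rpow (by positivity) ?_ hγ
      rw [div_le_iff₀ hE]
      have hlt : Real.log (1 / b) < ((n:ℝ) + 1) * Real.log 2 := by
        rw [← hlogP]
        apply Real.log_lt_log (by positivity)
        rw [div_lt_iff₀ hb, mul_comm, ← hudef]
        exact hu1
      have hn0 : (0:ℝ) ≤ (n:ℝ) := Nat.cast_nonneg n
      rw [hLbdef, hEdef]
      linarith [mul_nonneg hn0 hlog2a, hlt]
    have key : b ^ β * Lb ^ γ * (M * (Q⁻¹) ^ s / E ^ γ) / ((P⁻¹) ^ q * b ^ (s + β - q))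
        = M * 2 ^ s * (u ^ (-(s - q)) * (Lb / E) ^ γ) := by
      have k2 : P ^ q = 2 ^ s * P ^ (-(s - q)) * Q ^ s := by
        rw [hP', hQ', ← Real.rpow_mul (by norm_num), ← Real.rpow_mul (by norm_num),
          ← Real.rpow_mul (by norm_num), ← Real.rpow_add h2, ← Real.rpow_add h2]
        congr 1
        ring
      have k5 : b ^ β = b ^ (-(s - q)) * b ^ (s + β - q) := by
        rw [← Real.rpow_add hb]
        congr 1
        ring
      have k6 : u ^ (-(s - q)) = b ^ (-(s - q)) * P ^ (-(s - q)) :=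
        Real.mul_rpow hb.le hP.le
      have k4 : (Lb / E) ^ γ = Lb ^ γ / E ^ γ := Real.div_rpow hLb.le hE.le γ
      rw [Real.inv_rpow hQ.le, Real.inv_rpow hP.le, k5, k6, k4]
      have l1 : Q ^ s ≠ 0 := by positivity
      have l2 : E ^ γ ≠ 0 := by positivity
      have l3 : b ^ (s + β - q) ≠ 0 := by positivity
      have l4 : P ^ q ≠ 0 := by positivity
      have k2' : P ^ q = 2 ^ s * P ^ (q - s) * Q ^ s := by
        rw [show q - s = -(s - q) by ring]; exact k2
      field_simp
      linear_combination k2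
    calc b ^ β * Lb ^ γ / ((P⁻¹) ^ q * b ^ (s + β - q)) * m
        = b ^ β * Lb ^ γ * m / ((P⁻¹) ^ q * b ^ (s + β - q)) := div_mul_eq_mul_div _ _ _
      _ ≤ b ^ β * Lb ^ γ * (M * (Q⁻¹) ^ s / E ^ γ) / ((P⁻¹) ^ q * b ^ (s + β - q)) := by
          gcongr
      _ = M * 2 ^ s * (u ^ (-(s - q)) * (Lb / E) ^ γ) := key
      _ ≤ M * 2 ^ s * (u ^ (-(s - q)) * 2 ^ γ) :=
          mul_le_mul_of_nonneg_left
            (mul_le_mul_of_nonneg_left hLbE (by positivity)) (by positivity)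
      _ = M * 2 ^ s * 2 ^ γ * 1 * u ^ (-(s - q)) := by ring
      _ ≤ M * 2 ^ s * 2 ^ γ * K1 * u ^ (-(s - q)) := by gcongr

set_option maxHeartbeats 1000000 in
/-- If `μ` is a `γ`-logarithmic `s`-Carleson measure on `[0,1)`, then the integral
`∫_0^1 (1-|w|)^β (log(e/(1-|w|)))^γ / ((1-t)^q (1-|w|t)^{s+β-q}) dμ(t)` is
uniformly bounded over `w` in the unit disc. -/
theorem logCarleson_implies_integral_bound (β γ q s : ℝ)
    (hβ : 0 < β) (hγ : 0 ≤ γ) (hq : 0 ≤ q) (hqs : q < s)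
    (μ : Measure ℝ) [IsFiniteMeasure μ]
    (hCar : ∃ M : ℝ, 0 < M ∧ ∀ a : ℝ, 0 ≤ a → a < 1 →
      (Real.log (Real.exp 1 / (1 - a))) ^ γ * (μ (Set.Ico a 1)).toReal ≤ M * (1 - a) ^ s) :
    ∃ C : ℝ, ∀ w : ℂ, ‖w‖ < 1 →
      (∫ t in Set.Ico (0:ℝ) 1,
        (1 - ‖w‖) ^ β * (Real.log (Real.exp 1 / (1 - ‖w‖))) ^ γ /
          ((1 - t) ^ q * (1 - ‖w‖ * t) ^ (s + β - q)) ∂μ) ≤ C := by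
  obtain ⟨M, hM, hCar⟩ := hCar
  have h2 : (0:ℝ) < 2 := by norm_num
  set K : ℝ := M * 2 ^ s * 2 ^ γ * (1 + 2 * (γ + 1) / β) ^ γ with hKdef
  have hK0 : 0 < K := by
    have h1 : (0:ℝ) < 2 ^ s := Real.rpow_pos_of_pos h2 s
    have h3 : (0:ℝ) < 2 ^ γ := Real.rpow_pos_of_pos h2 γ
    have h4 : (0:ℝ) < (1 + 2 * (γ + 1) / β) ^ γ := Real.rpow_pos_of_pos (by positivity) γ
    positivity
  have hxδ : (2:ℝ) ^ (-(β/2)) < 1 := by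
    rw [Real.rpow_lt_one_iff (by norm_num)]; norm_num; linarith
  have hxδ' : (2:ℝ) ^ (-(s-q)) < 1 := by
    rw [Real.rpow_lt_one_iff (by norm_num)]; norm_num; linarith
  have hxδ0 : (0:ℝ) ≤ 2 ^ (-(β/2)) := Real.rpow_nonneg (by norm_num) _
  have hxδ'0 : (0:ℝ) ≤ 2 ^ (-(s-q)) := Real.rpow_nonneg (by norm_num) _
  set C : ℝ := K * ((1 - 2 ^ (-(β/2)))⁻¹ + (1 - 2 ^ (-(s-q)))⁻¹) with hCdef
  have hC0 : 0 ≤ C := by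
    have i1 : (0:ℝ) ≤ (1 - 2 ^ (-(β/2)))⁻¹ := by
      apply inv_nonneg.mpr; linarith
    have i2 : (0:ℝ) ≤ (1 - 2 ^ (-(s-q)))⁻¹ := by
      apply inv_nonneg.mpr; linarith
    positivity
  refine ⟨C, ?_⟩
  intro w hw
  set r : ℝ := ‖w‖ with hrdef
  have hr0 : 0 ≤ r := norm_nonneg w
  have hr1 : r < 1 := hw
  set b : ℝ := 1 - r with hbdef
  have hb : 0 < b := by simp only [hbdef]; linarith
  have hb1 : b ≤ 1 := by simp only [hbdef]; linarith
  have hLeq : Real.log (Real.exp 1 / b) = 1 + Real.log (1 / b) := by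
    rw [Real.log_div (Real.exp_ne_zero 1) hb.ne', Real.log_exp,
      Real.log_div one_ne_zero hb.ne', Real.log_one]
    ring
  have hlogb0 : 0 ≤ Real.log (1 / b) := Real.log_nonneg (by rw [le_div_iff₀ hb]; linarith)
  simp only [hLeq]
  -- the integrand
  set f : ℝ → ℝ := fun t => b ^ β * (1 + Real.log (1 / b)) ^ γ /
      ((1 - t) ^ q * (1 - r * t) ^ (s + β - q)) with hfdef
  have hmeas : Measurable f := by
    apply Measurable.div measurable_const
    apply Measurable.mul
    · exact ((Real.continuous_rpow_const hq).comp
        (continuous_const.sub continuous_id)).measurable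
    · exact ((Real.continuous_rpow_const (by linarith : (0:ℝ) ≤ s + β - q)).comp
        (continuous_const.sub (continuous_const.mul continuous_id))).measurable
  have hnn : ∀ t ∈ Set.Ico (0:ℝ) 1, 0 ≤ f t := by
    intro t ht
    obtain ⟨ht0, ht1⟩ := ht
    have h1 : (0:ℝ) ≤ 1 - t := by linarith
    have h2' : (0:ℝ) ≤ 1 - r * t := by nlinarith
    have hnum : 0 ≤ b ^ β * (1 + Real.log (1 / b)) ^ γ := by positivity
    exact div_nonneg hnum (mul_nonneg (Real.rpow_nonneg h1 q) (Real.rpow_nonneg h2' _))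
  rw [integral_eq_lintegral_of_nonneg_ae
    ((ae_restrict_iff' measurableSet_Ico).mpr (Filter.Eventually.of_forall hnn))
    hmeas.aestronglyMeasurable]
  apply ENNReal.toReal_le_of_le_ofReal hC0
  -- dyadic decomposition
  set I : ℕ → Set ℝ := fun n => Set.Ico (1 - ((2:ℝ)^n)⁻¹) (1 - ((2:ℝ)^(n+1))⁻¹) with hIdef
  have hicov : Set.Ico (0:ℝ) 1 = ⋃ n, I n := by
    ext x
    simp only [hIdef, Set.mem_Ico, Set.mem_iUnion]
    constructor
    · rintro ⟨hx0, hx1⟩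
      have hy : 0 < 1 - x := by linarith
      have hex : ∃ n : ℕ, ((2:ℝ)^(n+1))⁻¹ < 1 - x := by
        obtain ⟨n, hn⟩ := exists_pow_lt_of_lt_one hy (by norm_num : (1:ℝ)/2 < 1)
        refine ⟨n, lt_of_le_of_lt ?_ hn⟩
        rw [div_pow, one_pow, one_div]
        apply inv_anti₀ (by positivity)
        apply pow_le_pow_right₀ (by norm_num) (by omega)
      refine ⟨Nat.find hex, ?_, ?_⟩
      · rcases Nat.eq_zero_or_pos (Nat.find hex) with h0 | h0
        · rw [h0]; simpa using hx0
        · have hmin := Nat.find_min hex (m := Nat.find hex - 1) (by omega)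
          push_neg at hmin
          rw [Nat.sub_add_cancel h0] at hmin
          linarith
      · have := Nat.find_spec hex
        linarith
    · rintro ⟨n, hn1, hn2⟩
      have e1 : ((2:ℝ)^n)⁻¹ ≤ 1 := by
        rw [inv_le_one_iff₀]; right; exact one_le_pow₀ (by norm_num)
      have e2 : (0:ℝ) < ((2:ℝ)^(n+1))⁻¹ := by positivity
      exact ⟨by linarith, by linarith⟩
  have hIdisj : Pairwise (Function.onFun Disjoint I) := by
    intro i j hij
    wlog hlt : i < j generalizing i j
    · exact (this hij.symm (by omega)).symm
    · apply Set.disjoint_left.mpr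
      rintro x ⟨hx1, hx2⟩ ⟨hy1, hy2⟩
      have hmono : ((2:ℝ)^j)⁻¹ ≤ ((2:ℝ)^(i+1))⁻¹ := by
        apply inv_anti₀ (by positivity)
        apply pow_le_pow_right₀ (by norm_num) (by omega)
      simp only [hIdef] at *
      linarith
  rw [hicov, lintegral_iUnion (fun n => measurableSet_Ico) hIdisj]
  -- per-piece bound
  have hterm : ∀ n : ℕ, ∫⁻ t in I n, ENNReal.ofReal (f t) ∂μ ≤
      ENNReal.ofReal (K * min ((b * 2 ^ (n+1)) ^ (β / 2)) ((b * 2 ^ (n+1)) ^ (-(s - q)))) := by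
    intro n
    set P : ℝ := (2:ℝ) ^ (n+1) with hPdef
    have hP : 0 < P := by positivity
    set G : ℝ := b ^ β * (1 + Real.log (1 / b)) ^ γ /
        ((P⁻¹) ^ q * (max (P⁻¹) b) ^ (s + β - q)) with hGdef
    have hmaxpos : 0 < max (P⁻¹) b := lt_max_of_lt_left (by positivity)
    have hG0 : 0 ≤ G := by
      apply div_nonneg (by positivity)
      exact mul_nonneg (Real.rpow_nonneg (by positivity) q)
        (Real.rpow_nonneg hmaxpos.le _)
    have hpt : ∀ t ∈ I n, f t ≤ G := by
      intro t ht
      simp only [hIdef, Set.mem_Ico] at ht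
      obtain ⟨ht1, ht2⟩ := ht
      have e1 : ((2:ℝ)^n)⁻¹ ≤ 1 := by
        rw [inv_le_one_iff₀]; right; exact one_le_pow₀ (by norm_num)
      have ht0 : 0 ≤ t := by linarith
      have htle : t ≤ 1 := by
        have : (0:ℝ) < P⁻¹ := by positivity
        linarith
      have hd1 : P⁻¹ ≤ 1 - t := by rw [hPdef]; linarith
      have hrt1 : r * t ≤ t := by nlinarith
      have hrt2 : r * t ≤ r := by nlinarith
      have hd2 : max (P⁻¹) b ≤ 1 - r * t := by
        apply max_le
        · linarith
        · rw [hbdef]; linarith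
      rw [hfdef, hGdef]
      apply div_le_div_of_nonneg_left (by positivity)
      · apply mul_pos (Real.rpow_pos_of_pos (by positivity) q)
          (Real.rpow_pos_of_pos hmaxpos _)
      · apply mul_le_mul
        · exact Real.rpow_le_rpow (by positivity) hd1 hq
        · exact Real.rpow_le_rpow hmaxpos.le hd2 (by linarith)
        · exact Real.rpow_nonneg hmaxpos.le _
        · exact Real.rpow_nonneg (by linarith) q
    have hCarn : (1 + n * Real.log 2) ^ γ * (μ (Set.Ico (1 - ((2:ℝ)^n)⁻¹) 1)).toReal
        ≤ M * (((2:ℝ) ^ n)⁻¹) ^ s := by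
      have e1 : ((2:ℝ)^n)⁻¹ ≤ 1 := by
        rw [inv_le_one_iff₀]; right; exact one_le_pow₀ (by norm_num)
      have e2 : (0:ℝ) < ((2:ℝ)^n)⁻¹ := by positivity
      have := hCar (1 - ((2:ℝ)^n)⁻¹) (by linarith) (by linarith)
      rw [sub_sub_cancel] at this
      rwa [Real.log_div (Real.exp_ne_zero 1) (by positivity), Real.log_exp,
        Real.log_inv, Real.log_pow, sub_neg_eq_add] at this
    calc ∫⁻ t in I n, ENNReal.ofReal (f t) ∂μ
        ≤ ∫⁻ _ in I n, ENNReal.ofReal G ∂μ :=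
          setLIntegral_mono measurable_const (fun t ht => ENNReal.ofReal_le_ofReal (hpt t ht))
      _ = ENNReal.ofReal G * μ (I n) := setLIntegral_const _ _
      _ ≤ ENNReal.ofReal G * μ (Set.Ico (1 - ((2:ℝ)^n)⁻¹) 1) := by
          apply mul_le_mul_right
          apply measure_mono
          apply Set.Ico_subset_Ico_right
          have : (0:ℝ) < ((2:ℝ)^(n+1))⁻¹ := by positivity
          linarith
      _ = ENNReal.ofReal (G * (μ (Set.Ico (1 - ((2:ℝ)^n)⁻¹) 1)).toReal) := by
          rw [← ENNReal.ofReal_toReal (measure_ne_top μ (Set.Ico (1 - ((2:ℝ)^n)⁻¹) 1)),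
            ← ENNReal.ofReal_mul hG0, ENNReal.ofReal_toReal (measure_ne_top μ _)]
      _ ≤ ENNReal.ofReal (K * min ((b * 2 ^ (n+1)) ^ (β / 2)) ((b * 2 ^ (n+1)) ^ (-(s - q)))) := by
          apply ENNReal.ofReal_le_ofReal
          rw [hGdef, hKdef]
          exact per_n_bound hβ hγ hq hqs hM hb hb1 n ENNReal.toReal_nonneg hCarn
  have hsummin : Summable (fun n : ℕ =>
      min ((b * 2 ^ (n+1)) ^ (β / 2)) ((b * 2 ^ (n+1)) ^ (-(s - q)))) :=
    minfun_summable hb (by positivity) (by linarith)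
  calc ∑' n, ∫⁻ t in I n, ENNReal.ofReal (f t) ∂μ
      ≤ ∑' n, ENNReal.ofReal
          (K * min ((b * 2 ^ (n+1)) ^ (β / 2)) ((b * 2 ^ (n+1)) ^ (-(s - q)))) :=
        ENNReal.tsum_le_tsum hterm
    _ = ENNReal.ofReal (∑' n, K * min ((b * 2 ^ (n+1)) ^ (β / 2)) ((b * 2 ^ (n+1)) ^ (-(s - q)))) := by
        rw [ENNReal.ofReal_tsum_of_nonneg]
        · intro n
          have : (0:ℝ) < b * 2 ^ (n+1) := by positivity
          have h1 := Real.rpow_nonneg this.le (β/2)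
          have h2 := Real.rpow_nonneg this.le (-(s-q))
          exact mul_nonneg hK0.le (le_min h1 h2)
        · exact hsummin.mul_left K
    _ ≤ ENNReal.ofReal C := by
        apply ENNReal.ofReal_le_ofReal
        rw [tsum_mul_left, hCdef]
        exact mul_le_mul_of_nonneg_left
          (minfun_tsum_le hb hb1 (by positivity) (by linarith) hsummin) hK0.le
end

section
/- Let μ be a finite positive Borel measure on [0,1) that is a 1-logarithmic 1-Carleson measure, i.e. log(e/(1-a)) μ([a,1)) ≲ (1-a). Then sup_{0≤r<1} ∫_0^1 (1-r) log(e/(1-t)) / (1-tr)^2 dμ(t) < ∞. -/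
open MeasureTheory Set
open scoped ENNReal

/-- Splitting an `ℝ≥0∞`-valued series at index `N`. -/
private lemma tsum_split_bound (f : ℕ → ℝ≥0∞) (N : ℕ) :
    ∑' n, f n ≤ ∑ i ∈ Finset.range N, f i + ∑' i, f (N + i) := by
  rw [ENNReal.tsum_eq_iSup_nat]
  refine iSup_le fun k => ?_
  rcases le_or_gt k N with h | h
  · exact le_add_right (Finset.sum_le_sum_of_subset (Finset.range_subset_range.2 h))
  · rw [← Finset.sum_range_add_sum_Ico f h.le]
    gcongr
    rw [Finset.sum_Ico_eq_sum_range]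
    exact ENNReal.sum_le_tsum _

set_option maxHeartbeats 2000000 in
/-- If `μ` is a 1-logarithmic 1-Carleson measure on `[0,1)`, then
`sup_{0≤r<1} ∫_0^1 (1-r) log(e/(1-t))/(1-tr)^2 dμ(t) < ∞`. -/
theorem logCarleson_integral_bound (μ : Measure ℝ) [IsFiniteMeasure μ]
    (hCar : ∃ M : ℝ, 0 < M ∧ ∀ a : ℝ, 0 ≤ a → a < 1 →
      Real.log (Real.exp 1 / (1 - a)) * (μ (Set.Ico a 1)).toReal ≤ M * (1 - a)) :
    ∃ C : ℝ, ∀ r : ℝ, 0 ≤ r → r < 1 →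
      (∫ t in Set.Ico (0:ℝ) 1,
        (1 - r) * Real.log (Real.exp 1 / (1 - t)) / (1 - t * r) ^ (2:ℝ) ∂μ) ≤ C := by
  classical
  obtain ⟨M, hM0, hCar⟩ := hCar
  refine ⟨80 * M, fun r hr0 hr1 => ?_⟩
  set ρ : ℝ := 1 - r with hρdef
  have hρ0 : 0 < ρ := by simp only [hρdef]; linarith
  have hρ1 : ρ ≤ 1 := by simp only [hρdef]; linarith
  set f : ℝ → ℝ := fun t => ρ * Real.log (Real.exp 1 / (1 - t)) / (1 - t * r) ^ (2:ℝ)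
    with hfdef
  have hlog2_pos : (0:ℝ) < Real.log 2 := Real.log_pos one_lt_two
  have hlog2_le : Real.log 2 ≤ 1 := by
    have := Real.log_two_lt_d9
    linarith
  have hA_pos : ∀ n : ℕ, (0:ℝ) < 1 + n * Real.log 2 := by
    intro n
    have : (0:ℝ) ≤ n * Real.log 2 := mul_nonneg (Nat.cast_nonneg n) hlog2_pos.le
    linarith
  -- basic facts about powers of 1/2
  have hu_pos : ∀ n : ℕ, (0:ℝ) < (1/2:ℝ)^n := fun n => pow_pos (by norm_num) n
  have hu_le_one : ∀ n : ℕ, ((1/2:ℝ))^n ≤ 1 := fun n => pow_le_one₀ (by norm_num) (by norm_num)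
  -- measurability
  have hf_meas : Measurable f := by
    apply Measurable.div
    · exact measurable_const.mul
        (Real.measurable_log.comp (measurable_const.div (measurable_const.sub measurable_id)))
    · have h : Continuous fun t : ℝ => (1 - t * r) ^ (2:ℝ) := by
        apply Continuous.rpow_const (by continuity)
        intro x; right; norm_num
      exact h.measurable
  -- nonnegativity on [0,1)
  have hf_nonneg : ∀ t ∈ Ico (0:ℝ) 1, 0 ≤ f t := by
    rintro t ⟨ht0, ht1⟩
    have hs : (0:ℝ) < 1 - t := by linarith
    have he : (1:ℝ) ≤ Real.exp 1 / (1 - t) := by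
      rw [le_div_iff₀ hs]
      have := Real.exp_one_gt_d9
      linarith
    have htr : (0:ℝ) ≤ 1 - t * r := by nlinarith
    exact div_nonneg (mul_nonneg hρ0.le (Real.log_nonneg he)) (Real.rpow_nonneg htr 2)
  -- the dyadic layers
  set S : ℕ → Set ℝ := fun n => Ico (1 - (1/2:ℝ)^n) (1 - (1/2:ℝ)^(n+1)) with hS
  have hSmeas : ∀ n, MeasurableSet (S n) := fun n => measurableSet_Ico
  have hUnion : Ico (0:ℝ) 1 = ⋃ n, S n := by
    ext t
    simp only [hS, mem_iUnion, mem_Ico]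
    constructor
    · rintro ⟨ht0, ht1⟩
      have hs0 : 0 < 1 - t := by linarith
      have hex : ∃ m : ℕ, (1/2:ℝ)^m < 1 - t := exists_pow_lt_of_lt_one hs0 (by norm_num)
      have hm0 : Nat.find hex ≠ 0 := by
        intro h0
        have := Nat.find_spec hex
        rw [h0] at this
        simp at this
        linarith
      obtain ⟨k, hk⟩ := Nat.exists_eq_succ_of_ne_zero hm0
      refine ⟨k, ?_, ?_⟩
      · have hmin := Nat.find_min hex (show k < Nat.find hex by omega)
        push_neg at hmin
        linarith
      · have := Nat.find_spec hex
        rw [hk, Nat.succ_eq_add_one] at this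
        linarith
    · rintro ⟨n, hn1, hn2⟩
      have h1 := hu_le_one n
      have h2 := hu_pos (n+1)
      exact ⟨by linarith, by linarith⟩
  have hdisj : Pairwise (Function.onFun Disjoint S) := by
    have key : ∀ i j : ℕ, i < j → Disjoint (S i) (S j) := by
      intro i j h
      rw [Set.disjoint_left]
      intro t ht1 ht2
      simp only [hS, mem_Ico] at ht1 ht2
      have hpw : ((1/2:ℝ))^j ≤ (1/2:ℝ)^(i+1) :=
        pow_le_pow_of_le_one (by norm_num) (by norm_num) h
      linarith [ht1.2, ht2.1]
    intro i j hij
    rcases hij.lt_or_gt with h | h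
    · exact key _ _ h
    · exact (key _ _ h).symm
  -- measure of each layer, via the Carleson hypothesis
  have hmuS : ∀ n : ℕ, μ (S n) ≤ ENNReal.ofReal (M * (1/2)^n / (1 + n * Real.log 2)) := by
    intro n
    have hsub : S n ⊆ Ico (1 - (1/2:ℝ)^n) 1 := by
      rw [hS]
      exact Ico_subset_Ico_right (by linarith [hu_pos (n+1)])
    have h1 : μ (S n) ≤ μ (Ico (1 - (1/2:ℝ)^n) 1) := measure_mono hsub
    have hC := hCar (1 - (1/2:ℝ)^n) (by linarith [hu_le_one n]) (by linarith [hu_pos n])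
    have heq : (1:ℝ) - (1 - (1/2:ℝ)^n) = (1/2)^n := by ring
    rw [heq] at hC
    have hlog : Real.log (Real.exp 1 / ((1/2:ℝ)^n)) = 1 + n * Real.log 2 := by
      rw [Real.log_div (Real.exp_ne_zero 1) (ne_of_gt (hu_pos n)), Real.log_exp,
        Real.log_pow, one_div, Real.log_inv]
      ring
    rw [hlog] at hC
    have h2 : (μ (Ico (1 - (1/2:ℝ)^n) 1)).toReal ≤ M * (1/2)^n / (1 + n * Real.log 2) := by
      rw [le_div_iff₀ (hA_pos n)]
      linarith [hC]
    calc μ (S n) ≤ μ (Ico (1 - (1/2:ℝ)^n) 1) := h1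
      _ = ENNReal.ofReal ((μ (Ico (1 - (1/2:ℝ)^n) 1)).toReal) :=
          (ENNReal.ofReal_toReal (measure_ne_top μ _)).symm
      _ ≤ ENNReal.ofReal (M * (1/2)^n / (1 + n * Real.log 2)) := ENNReal.ofReal_le_ofReal h2
  -- pointwise bound on each layer
  have hpoint : ∀ n : ℕ, ∀ t ∈ S n,
      f t ≤ 4 * ρ * (1 + ((n:ℝ)+1) * Real.log 2) / (((1/2:ℝ)^(n+1) + ρ)^2) := by
    intro n t ht
    simp only [hS, mem_Ico] at ht
    obtain ⟨ht1, ht2⟩ := ht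
    have hv := hu_pos (n+1)
    have hs1 : (1/2:ℝ)^(n+1) < 1 - t := by linarith
    have hs2 : 1 - t ≤ (1/2:ℝ)^n := by linarith
    have ht0 : 0 ≤ t := by linarith [hu_le_one n]
    have hst : 0 < 1 - t := by linarith
    have hden : ((1 - t) + ρ)/2 ≤ 1 - t * r := by nlinarith
    have hden2 : ((1/2:ℝ)^(n+1) + ρ)/2 ≤ 1 - t * r := by linarith
    have hdpos : (0:ℝ) < ((1/2:ℝ)^(n+1) + ρ)/2 := by linarith
    have hrpow : (1 - t * r) ^ (2:ℝ) = (1 - t * r)^2 := by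
      rw [show (2:ℝ) = ((2:ℕ):ℝ) by norm_num, Real.rpow_natCast]
    have hD : (((1/2:ℝ)^(n+1) + ρ)/2)^2 ≤ (1 - t * r)^2 := pow_le_pow_left₀ hdpos.le hden2 2
    have hLle : Real.log (Real.exp 1 / (1 - t)) ≤ 1 + ((n:ℝ)+1) * Real.log 2 := by
      rw [Real.log_div (Real.exp_ne_zero 1) (ne_of_gt hst), Real.log_exp]
      have hll : Real.log ((1/2:ℝ)^(n+1)) ≤ Real.log (1 - t) :=
        Real.log_le_log hv hs1.le
      rw [Real.log_pow, one_div, Real.log_inv] at hll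
      push_cast at hll ⊢
      linarith
    have hLnn : 0 ≤ Real.log (Real.exp 1 / (1 - t)) := by
      apply Real.log_nonneg
      rw [le_div_iff₀ hst]
      have := Real.exp_one_gt_d9
      linarith
    have step1 : f t ≤ ρ * (1 + ((n:ℝ)+1) * Real.log 2) / ((((1/2:ℝ)^(n+1) + ρ)/2)^2) := by
      rw [hfdef]
      simp only
      rw [hrpow]
      exact div_le_div₀ (mul_nonneg hρ0.le (by positivity))
        (mul_le_mul_of_nonneg_left hLle hρ0.le) (by positivity) hD
    have step2 : ρ * (1 + ((n:ℝ)+1) * Real.log 2) / ((((1/2:ℝ)^(n+1) + ρ)/2)^2)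
        = 4 * ρ * (1 + ((n:ℝ)+1) * Real.log 2) / (((1/2:ℝ)^(n+1) + ρ)^2) := by
      have hne : ((1/2:ℝ)^(n+1) + ρ) ≠ 0 := by positivity
      field_simp
      ring
    rw [step2] at step1
    exact step1
  -- per-layer integral bound
  have hlayer : ∀ n : ℕ, ∫⁻ t in S n, ENNReal.ofReal (f t) ∂μ ≤
      ENNReal.ofReal (8 * M * ρ * (1/2)^n / (((1/2:ℝ)^(n+1) + ρ)^2)) := by
    intro n
    have hq : (0:ℝ) < ((1/2:ℝ)^(n+1) + ρ)^2 := by positivity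
    have hcnn : (0:ℝ) ≤ 4 * ρ * (1 + ((n:ℝ)+1) * Real.log 2) / (((1/2:ℝ)^(n+1) + ρ)^2) := by
      have : (0:ℝ) ≤ 1 + ((n:ℝ)+1) * Real.log 2 := by positivity
      positivity
    calc ∫⁻ t in S n, ENNReal.ofReal (f t) ∂μ
        ≤ ∫⁻ _ in S n,
            ENNReal.ofReal (4 * ρ * (1 + ((n:ℝ)+1) * Real.log 2) / (((1/2:ℝ)^(n+1) + ρ)^2)) ∂μ :=
          setLIntegral_mono measurable_const fun t ht =>
            ENNReal.ofReal_le_ofReal (hpoint n t ht)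
      _ = ENNReal.ofReal (4 * ρ * (1 + ((n:ℝ)+1) * Real.log 2) / (((1/2:ℝ)^(n+1) + ρ)^2))
            * μ (S n) := setLIntegral_const _ _
      _ ≤ ENNReal.ofReal (4 * ρ * (1 + ((n:ℝ)+1) * Real.log 2) / (((1/2:ℝ)^(n+1) + ρ)^2))
            * ENNReal.ofReal (M * (1/2)^n / (1 + n * Real.log 2)) := by
          exact mul_le_mul_right (hmuS n) _
      _ = ENNReal.ofReal ((4 * ρ * (1 + ((n:ℝ)+1) * Real.log 2) / (((1/2:ℝ)^(n+1) + ρ)^2))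
            * (M * (1/2)^n / (1 + n * Real.log 2))) := (ENNReal.ofReal_mul hcnn).symm
      _ ≤ ENNReal.ofReal (8 * M * ρ * (1/2)^n / (((1/2:ℝ)^(n+1) + ρ)^2)) := by
          apply ENNReal.ofReal_le_ofReal
          have hAn := hA_pos n
          have hfrac : 4 * (1 + ((n:ℝ)+1) * Real.log 2) / (1 + n * Real.log 2) ≤ 8 := by
            rw [div_le_iff₀ hAn]
            nlinarith [Nat.cast_nonneg (α := ℝ) n]
          have hrw : (4 * ρ * (1 + ((n:ℝ)+1) * Real.log 2) / (((1/2:ℝ)^(n+1) + ρ)^2))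
              * (M * (1/2)^n / (1 + n * Real.log 2))
              = (M * ρ * (1/2)^n / (((1/2:ℝ)^(n+1) + ρ)^2))
                * (4 * (1 + ((n:ℝ)+1) * Real.log 2) / (1 + n * Real.log 2)) := by
            field_simp
          have hrw2 : 8 * M * ρ * (1/2)^n / (((1/2:ℝ)^(n+1) + ρ)^2)
              = (M * ρ * (1/2)^n / (((1/2:ℝ)^(n+1) + ρ)^2)) * 8 := by ring
          rw [hrw, hrw2]
          apply mul_le_mul_of_nonneg_left hfrac
          positivity
  -- choose the splitting index N
  obtain ⟨N, hN1, hN2⟩ : ∃ N : ℕ, ρ⁻¹ ≤ 2^N ∧ ρ * 2^N ≤ 2 := by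
    have hex : ∃ n : ℕ, ρ⁻¹ < (2:ℝ)^n := pow_unbounded_of_one_lt ρ⁻¹ one_lt_two
    refine ⟨Nat.find hex, (Nat.find_spec hex).le, ?_⟩
    by_cases hN0 : Nat.find hex = 0
    · rw [hN0]; norm_num; linarith
    · obtain ⟨m, hm⟩ := Nat.exists_eq_succ_of_ne_zero hN0
      have hmin := Nat.find_min hex (show m < Nat.find hex by omega)
      push_neg at hmin
      have h2 : ρ * 2^m ≤ 1 := by
        calc ρ * 2^m ≤ ρ * ρ⁻¹ := mul_le_mul_of_nonneg_left hmin hρ0.le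
          _ = 1 := mul_inv_cancel₀ hρ0.ne'
      rw [hm, pow_succ]
      nlinarith
  have hone : 1 ≤ ρ * 2^N := by
    calc (1:ℝ) = ρ * ρ⁻¹ := (mul_inv_cancel₀ hρ0.ne').symm
      _ ≤ ρ * 2^N := mul_le_mul_of_nonneg_left hN1 hρ0.le
  have h2N : (0:ℝ) < 2^N := by positivity
  have huN : (1/2:ℝ)^N ≤ ρ := by
    rw [one_div, inv_pow]
    rw [inv_le_iff_one_le_mul₀' h2N]
    linarith [hone]
  -- the main lintegral bound
  have hmain : ∫⁻ t in Ico (0:ℝ) 1, ENNReal.ofReal (f t) ∂μ ≤ ENNReal.ofReal (80 * M) := by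
    rw [hUnion, lintegral_iUnion hSmeas hdisj]
    have part1 : ∑ i ∈ Finset.range N, ∫⁻ t in S i, ENNReal.ofReal (f t) ∂μ
        ≤ ENNReal.ofReal (64 * M) := by
      have hbound : ∀ i : ℕ, ∫⁻ t in S i, ENNReal.ofReal (f t) ∂μ
          ≤ ENNReal.ofReal (32 * M * ρ * 2^i) := by
        intro i
        refine (hlayer i).trans (ENNReal.ofReal_le_ofReal ?_)
        have hw : (0:ℝ) < (2:ℝ)^i := by positivity
        have hwp : ((1/2:ℝ))^i = ((2:ℝ)^i)⁻¹ := by rw [one_div, inv_pow]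
        have hv2 : (0:ℝ) < ((1/2:ℝ)^(i+1))^2 := by positivity
        have h1 : 8 * M * ρ * (1/2)^i / (((1/2:ℝ)^(i+1) + ρ)^2)
            ≤ 8 * M * ρ * (1/2)^i / (((1/2:ℝ)^(i+1))^2) := by
          apply div_le_div_of_nonneg_left (by positivity) hv2
          nlinarith [hu_pos (i+1), hρ0]
        refine h1.trans (le_of_eq ?_)
        rw [pow_succ]
        rw [hwp]
        field_simp
        ring_nf
        rw [← mul_pow]
        norm_num
      calc ∑ i ∈ Finset.range N, ∫⁻ t in S i, ENNReal.ofReal (f t) ∂μ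
          ≤ ∑ i ∈ Finset.range N, ENNReal.ofReal (32 * M * ρ * 2^i) :=
            Finset.sum_le_sum fun i _ => hbound i
        _ = ENNReal.ofReal (∑ i ∈ Finset.range N, 32 * M * ρ * 2^i) :=
            (ENNReal.ofReal_sum_of_nonneg fun i _ => by positivity).symm
        _ ≤ ENNReal.ofReal (64 * M) := by
            apply ENNReal.ofReal_le_ofReal
            have hgeom : ∑ i ∈ Finset.range N, (32 * M * ρ) * 2^i
                = (32 * M * ρ) * ((2^N - 1)/(2-1)) := by
              rw [← Finset.mul_sum, geom_sum_eq (by norm_num : (2:ℝ) ≠ 1)]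
            calc ∑ i ∈ Finset.range N, 32 * M * ρ * 2^i
                = (32 * M * ρ) * ((2^N - 1)/(2-1)) := hgeom
              _ ≤ 64 * M := by
                  rw [show ((2:ℝ) - 1) = 1 by norm_num, div_one]
                  nlinarith [hN2, hρ0.le, hM0.le, h2N]
    have part2 : ∑' i, ∫⁻ t in S (N + i), ENNReal.ofReal (f t) ∂μ
        ≤ ENNReal.ofReal (16 * M) := by
      have hbound : ∀ i : ℕ, ∫⁻ t in S (N + i), ENNReal.ofReal (f t) ∂μ
          ≤ ENNReal.ofReal (8 * M * (1/2:ℝ)^N / ρ) * ENNReal.ofReal ((1/2:ℝ)^i) := by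
        intro i
        refine (hlayer (N + i)).trans ?_
        rw [← ENNReal.ofReal_mul (by positivity)]
        apply ENNReal.ofReal_le_ofReal
        have hρ2 : (0:ℝ) < ρ^2 := by positivity
        have h1 : 8 * M * ρ * (1/2)^(N+i) / (((1/2:ℝ)^(N+i+1) + ρ)^2)
            ≤ 8 * M * ρ * (1/2)^(N+i) / (ρ^2) := by
          apply div_le_div_of_nonneg_left (by positivity) hρ2
          nlinarith [hu_pos (N+i+1), hρ0]
        refine h1.trans (le_of_eq ?_)
        rw [pow_add]
        field_simp
      calc ∑' i, ∫⁻ t in S (N + i), ENNReal.ofReal (f t) ∂μ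
          ≤ ∑' i, ENNReal.ofReal (8 * M * (1/2:ℝ)^N / ρ) * ENNReal.ofReal ((1/2:ℝ)^i) :=
            ENNReal.tsum_le_tsum hbound
        _ = ENNReal.ofReal (8 * M * (1/2:ℝ)^N / ρ) * ∑' i, ENNReal.ofReal ((1/2:ℝ)^i) :=
            ENNReal.tsum_mul_left
        _ = ENNReal.ofReal (8 * M * (1/2:ℝ)^N / ρ) * 2 := by
            congr 1
            have hterm : ∀ i : ℕ, ENNReal.ofReal ((1/2:ℝ)^i) = (2⁻¹ : ℝ≥0∞)^i := by
              intro i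
              rw [ENNReal.ofReal_pow (by norm_num)]
              congr 1
              rw [show (1/2:ℝ) = (2:ℝ)⁻¹ by norm_num,
                ENNReal.ofReal_inv_of_pos (by norm_num)]
              norm_num
            rw [tsum_congr hterm, ENNReal.tsum_geometric, ENNReal.one_sub_inv_two, inv_inv]
        _ ≤ ENNReal.ofReal (8 * M) * 2 := by
            apply mul_le_mul_left
            apply ENNReal.ofReal_le_ofReal
            rw [div_le_iff₀ hρ0]
            nlinarith [huN, hM0.le]
        _ = ENNReal.ofReal (16 * M) := by
            rw [show (2:ℝ≥0∞) = ENNReal.ofReal 2 by simp,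
              ← ENNReal.ofReal_mul (by positivity)]
            congr 1
            ring
    calc ∑' n, ∫⁻ t in S n, ENNReal.ofReal (f t) ∂μ
        ≤ ∑ i ∈ Finset.range N, (∫⁻ t in S i, ENNReal.ofReal (f t) ∂μ)
          + ∑' i, ∫⁻ t in S (N + i), ENNReal.ofReal (f t) ∂μ :=
          tsum_split_bound _ N
      _ ≤ ENNReal.ofReal (64 * M) + ENNReal.ofReal (16 * M) := add_le_add part1 part2
      _ = ENNReal.ofReal (80 * M) := by
          rw [← ENNReal.ofReal_add (by positivity) (by positivity)]
          congr 1
          ring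
  -- conclude
  have hnn : 0 ≤ᵐ[μ.restrict (Ico (0:ℝ) 1)] f :=
    (ae_restrict_iff' measurableSet_Ico).2 (Filter.Eventually.of_forall hf_nonneg)
  have hgoal : (∫ t in Set.Ico (0:ℝ) 1, f t ∂μ) ≤ 80 * M := by
    rw [integral_eq_lintegral_of_nonneg_ae hnn hf_meas.aestronglyMeasurable]
    exact ENNReal.toReal_le_of_le_ofReal (by positivity) hmain
  exact hgoal
end
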